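/- arXiv:1303.4079 — 2 statements merged into one kernel-verified Lean document; each statement's English description precedes it below -/
import Mathlib

section
/- Let l > 3 be a prime, G the Heisenberg group mod l as above, b = ((0,0),1), and σ the automorphism of G fixing (ℤ/lℤ)² and sending b ↦ ((0,1),0)·b. Then any subgroup N ⊆ G with σ(N) = N and b ∈ N equals G. -/
/-- The automorphism of `(ℤ/lℤ)²` given by the unipotent matrix `[[1,1],[0,1]]`
raised to the `n`-th power, i.e. `(x, y) ↦ (x + n·y, y)`. -/
def heisAut (l : ℕ) (n : ZMod l) : (ZMod l × ZMod l) ≃+ (ZMod l × ZMod l) where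
  toFun p := (p.1 + n * p.2, p.2)
  invFun p := (p.1 - n * p.2, p.2)
  left_inv p := by cases p; simp
  right_inv p := by cases p; simp
  map_add' p q := by cases p; cases q; simp [Prod.ext_iff]; ring

/-- The action of `ℤ/lℤ` on `(ℤ/lℤ)²` (written multiplicatively) through the
unipotent matrix `[[1,1],[0,1]]`. -/
def heisHom (l : ℕ) :
    Multiplicative (ZMod l) →* MulAut (Multiplicative (ZMod l × ZMod l)) :=
  MonoidHom.mk' (fun n => AddEquiv.toMultiplicative (heisAut l n.toAdd))
    (by
      intro a b
      ext p
      · show (Multiplicative.toAdd p).1 + (Multiplicative.toAdd a + Multiplicative.toAdd b)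
            * (Multiplicative.toAdd p).2 = (Multiplicative.toAdd p).1
            + Multiplicative.toAdd b * (Multiplicative.toAdd p).2
            + Multiplicative.toAdd a * (Multiplicative.toAdd p).2
        ring
      · rfl)

/-- The Heisenberg group mod `l`: the semidirect product
`((ℤ/lℤ) × (ℤ/lℤ)) ⋊ ℤ/lℤ` where the generator acts by `[[1,1],[0,1]]`. -/
def Heis (l : ℕ) : Type :=
  SemidirectProduct (Multiplicative (ZMod l × ZMod l)) (Multiplicative (ZMod l)) (heisHom l)

instance (l : ℕ) : Group (Heis l) :=
  inferInstanceAs (Group (SemidirectProduct _ _ _))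


/-- For a prime `l > 3`, if `σ` is the automorphism of the Heisenberg group
mod `l` fixing `(ℤ/lℤ)²` pointwise with `σ(b) = ((0,1),0)·b`, then any
subgroup `N` with `σ(N) = N` and `b ∈ N` equals the whole group. -/
theorem stmt_7 (l : ℕ) (hl : Nat.Prime l) (hl3 : 3 < l)
    (σ : MulAut (Heis l))
    (hfix : ∀ z : ZMod l × ZMod l,
        σ (SemidirectProduct.inl (Multiplicative.ofAdd z))
          = SemidirectProduct.inl (Multiplicative.ofAdd z))
    (hb : σ (SemidirectProduct.inr (Multiplicative.ofAdd (1 : ZMod l)))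
        = SemidirectProduct.inl (Multiplicative.ofAdd ((0 : ZMod l), (1 : ZMod l)))
            * SemidirectProduct.inr (Multiplicative.ofAdd (1 : ZMod l)))
    (N : Subgroup (Heis l))
    (hstable : Subgroup.map σ.toMonoidHom N = N)
    (hbN : SemidirectProduct.inr (Multiplicative.ofAdd (1 : ZMod l)) ∈ N) :
    N = ⊤ := by
  haveI : NeZero l := ⟨hl.pos.ne'⟩
  have hσbN : σ (SemidirectProduct.inr (Multiplicative.ofAdd (1 : ZMod l))) ∈ N := by
    rw [← hstable]; exact ⟨_, hbN, rfl⟩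
  have h01 : (SemidirectProduct.inl (Multiplicative.ofAdd ((0:ZMod l),(1:ZMod l))) : Heis l) ∈ N := by
    have := N.mul_mem hσbN (N.inv_mem hbN)
    rw [hb] at this
    exact (congrArg (· ∈ N) (mul_inv_cancel_right (G := Heis l)
      (SemidirectProduct.inl (Multiplicative.ofAdd ((0:ZMod l),(1:ZMod l))))
      (SemidirectProduct.inr (Multiplicative.ofAdd (1 : ZMod l))))).mp this
  have h11 : (SemidirectProduct.inl (Multiplicative.ofAdd ((1:ZMod l),(1:ZMod l))) : Heis l) ∈ N := by
    have h := N.mul_mem (N.mul_mem hbN h01) (N.inv_mem hbN)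
    have e2 : heisHom l (Multiplicative.ofAdd (1 : ZMod l))
        (Multiplicative.ofAdd ((0:ZMod l),(1:ZMod l)))
        = Multiplicative.ofAdd ((1:ZMod l),(1:ZMod l)) := by
      show Multiplicative.ofAdd (((0:ZMod l) + 1 * 1, (1:ZMod l))) = _
      norm_num
    have e : (SemidirectProduct.inr (Multiplicative.ofAdd (1 : ZMod l))
        * SemidirectProduct.inl (Multiplicative.ofAdd ((0:ZMod l),(1:ZMod l)))
        * (SemidirectProduct.inr (Multiplicative.ofAdd (1 : ZMod l)))⁻¹ : Heis l)
        = SemidirectProduct.inl (Multiplicative.ofAdd ((1:ZMod l),(1:ZMod l))) := by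
      have e3 := SemidirectProduct.inl_aut (φ := heisHom l)
        (Multiplicative.ofAdd (1 : ZMod l)) (Multiplicative.ofAdd ((0:ZMod l),(1:ZMod l)))
      rw [map_inv] at e3
      exact e3.symm.trans (congrArg SemidirectProduct.inl e2)
    exact (congrArg (· ∈ N) e).mp h
  have h10 : (SemidirectProduct.inl (Multiplicative.ofAdd ((1:ZMod l),(0:ZMod l))) : Heis l) ∈ N := by
    have h := N.mul_mem h11 (N.inv_mem h01)
    have e : (SemidirectProduct.inl (Multiplicative.ofAdd ((1:ZMod l),(1:ZMod l))) : Heis l)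
        * (SemidirectProduct.inl (Multiplicative.ofAdd ((0:ZMod l),(1:ZMod l))) : Heis l)⁻¹
        = SemidirectProduct.inl (Multiplicative.ofAdd ((1:ZMod l),(0:ZMod l))) := by
      rw [← map_inv, ← map_mul]
      congr 1
      rw [← ofAdd_neg, ← ofAdd_add]
      congr 1
      simp [Prod.ext_iff]
    exact (congrArg (· ∈ N) e).mp h
  have hinl : ∀ z : ZMod l × ZMod l,
      (SemidirectProduct.inl (Multiplicative.ofAdd z) : Heis l) ∈ N := by
    intro z
    have hz : z = z.1.val • ((1:ZMod l),(0:ZMod l)) + z.2.val • ((0:ZMod l),(1:ZMod l)) := by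
      cases z with
      | mk x y => simp [Prod.ext_iff, ZMod.natCast_val, ZMod.cast_id]
    rw [hz, ofAdd_add, map_mul, ofAdd_nsmul, ofAdd_nsmul, map_pow, map_pow]
    exact N.mul_mem (N.pow_mem h10 _) (N.pow_mem h01 _)
  have hinr : ∀ n : ZMod l,
      (SemidirectProduct.inr (Multiplicative.ofAdd n) : Heis l) ∈ N := by
    intro n
    have hn : n = n.val • (1 : ZMod l) := by simp [ZMod.natCast_val, ZMod.cast_id]
    rw [hn, ofAdd_nsmul, map_pow]
    exact N.pow_mem hbN _
  ext g
  simp only [Subgroup.mem_top, iff_true]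
  rw [← SemidirectProduct.inl_left_mul_inr_right g]
  exact N.mul_mem (hinl g.left.toAdd) (hinr g.right.toAdd)
end

section
/- Let k be a perfect field of characteristic p > 0, l/k a finite separable field extension, A ⊆ B an inclusion of commutative k-algebras with B reduced. If x ∈ B ⊗_k l satisfies x^{p^n} ∈ A ⊗ 1 (the image of A under a ↦ a⊗1) for some n ≥ 0, then x ∈ B ⊗ 1. -/
open scoped TensorProduct

set_option maxHeartbeats 1000000 in
/-- Let `k` be a perfect field of characteristic `p > 0`, `l/k` a finite
separable field extension, `A ⊆ B` an inclusion of commutative `k`-algebras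
with `B` reduced.  If `x ∈ B ⊗_k l` satisfies `x^{p^n} ∈ A ⊗ 1` for some `n`,
then `x ∈ B ⊗ 1`. -/
theorem stmt_11 (k l : Type*) [Field k] [Field l] [Algebra k l]
    [FiniteDimensional k l] [Algebra.IsSeparable k l]
    (p : ℕ) [Fact p.Prime] [CharP k p] [PerfectRing k p]
    (A B : Type*) [CommRing A] [CommRing B] [Algebra k A] [Algebra k B]
    [IsReduced B]
    (f : A →ₐ[k] B) (hf : Function.Injective f)
    (x : B ⊗[k] l) (n : ℕ)
    (hx : ∃ a : A, x ^ p ^ n = (f a) ⊗ₜ[k] (1 : l)) :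
    ∃ b : B, x = b ⊗ₜ[k] (1 : l) := by
  classical
  obtain ⟨a, ha⟩ := hx
  rcases subsingleton_or_nontrivial B with hB | hB
  · haveI := Module.subsingleton B (B ⊗[k] l)
    exact ⟨0, Subsingleton.elim _ _⟩
  have hp : p.Prime := Fact.out
  have hq0 : p ^ n ≠ 0 := pow_ne_zero n hp.ne_zero
  -- power basis of `l` over `k`
  let pb := Field.powerBasisOfFiniteOfSeparable k l
  have hd : 0 < pb.dim := pb.dim_pos
  let i0 : Fin pb.dim := ⟨0, hd⟩
  haveI : Nonempty (Fin pb.dim) := ⟨i0⟩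
  have hu0 : pb.basis i0 = 1 := by
    rw [pb.basis_eq_pow]
    simp [i0]
  -- nontriviality and characteristic
  haveI : Nontrivial (B ⊗[k] l) := by
    refine ⟨⟨(1 : B) ⊗ₜ pb.basis i0, 0, fun h => ?_⟩⟩
    have h10 : (pb.basis.baseChange B).repr ((1 : B) ⊗ₜ[k] pb.basis i0) i0 = 1 := by
      rw [Module.Basis.baseChange_repr_tmul, Module.Basis.repr_self_apply]
      simp
    rw [h] at h10
    simp at h10
  haveI : CharP (B ⊗[k] l) p :=
    charP_of_injective_algebraMap (algebraMap k (B ⊗[k] l)).injective p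
  haveI : ExpChar (B ⊗[k] l) p := ExpChar.prime hp
  haveI : CharP l p := charP_of_injective_algebraMap (algebraMap k l).injective p
  haveI : ExpChar l p := ExpChar.prime hp
  -- the `p^n`-th powers of the power basis again form a basis
  have hind : LinearIndependent k (fun i : Fin pb.dim => (pb.basis i) ^ p ^ n) := by
    rw [Fintype.linearIndependent_iff]
    intro g hg i
    set d : Fin pb.dim → k := fun i => (iterateFrobeniusEquiv k p n).symm (g i) with hdd
    have hdg : ∀ i, (d i) ^ p ^ n = g i := fun i =>
      (iterateFrobeniusEquiv k p n).apply_symm_apply (g i)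
    have hsum : (∑ i, d i • pb.basis i) ^ p ^ n = 0 := by
      rw [sum_pow_char_pow, ← hg]
      refine Finset.sum_congr rfl fun j _ => ?_
      rw [smul_pow, hdg]
    have h0 : (∑ i, d i • pb.basis i) = 0 := by
      exact pow_eq_zero_iff hq0 |>.mp hsum
    have hdi : d i = 0 :=
      (Fintype.linearIndependent_iff.mp pb.basis.linearIndependent) d h0 i
    rw [← hdg i, hdi, zero_pow hq0]
  have hcard : Fintype.card (Fin pb.dim) = Module.finrank k l := by
    simp [pb.finrank]
  let e : Module.Basis (Fin pb.dim) k l := basisOfLinearIndependentOfCardEqFinrank hind hcard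
  have he : ∀ i, e i = (pb.basis i) ^ p ^ n := fun i =>
    congrFun (coe_basisOfLinearIndependentOfCardEqFinrank hind hcard) i
  -- coordinates of `x`
  let bB := pb.basis.baseChange B
  set c : Fin pb.dim → B := fun i => bB.repr x i with hc
  have hx' : x = ∑ i, c i ⊗ₜ[k] pb.basis i := by
    conv_lhs => rw [← bB.sum_repr x]
    refine Finset.sum_congr rfl fun i _ => ?_
    rw [show bB i = (1 : B) ⊗ₜ[k] pb.basis i from Module.Basis.baseChange_apply ..,
      TensorProduct.smul_tmul', smul_eq_mul, mul_one]
  -- compute `x ^ p ^ n` in the basis `e`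
  have hxq : x ^ p ^ n = ∑ i, (c i ^ p ^ n) • (e.baseChange B) i := by
    rw [hx', sum_pow_char_pow]
    refine Finset.sum_congr rfl fun i _ => ?_
    rw [Algebra.TensorProduct.tmul_pow, ← he,
      show (e.baseChange B) i = (1 : B) ⊗ₜ[k] e i from Module.Basis.baseChange_apply ..,
      TensorProduct.smul_tmul', smul_eq_mul, mul_one]
  -- equate coordinates
  have hcoord : ∀ i, c i ^ p ^ n = (e.baseChange B).repr ((f a) ⊗ₜ[k] (1 : l)) i := by
    intro i
    rw [← ha, hxq, Module.Basis.repr_sum_self]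
  have he0 : e i0 = 1 := by rw [he, hu0, one_pow]
  have hczero : ∀ i, i ≠ i0 → c i = 0 := by
    intro i hi
    have h1 : (e.baseChange B).repr ((f a) ⊗ₜ[k] (1 : l)) i = e.repr 1 i • f a :=
      Module.Basis.baseChange_repr_tmul ..
    have h2 : e.repr (1 : l) i = 0 := by
      rw [← he0, Module.Basis.repr_self_apply]
      simp [Ne.symm hi]
    have h3 : c i ^ p ^ n = 0 := by rw [hcoord i, h1, h2, zero_smul]
    exact IsNilpotent.eq_zero ⟨p ^ n, h3⟩
  refine ⟨c i0, ?_⟩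
  rw [hx', Finset.sum_eq_single i0 (fun i _ hi => by rw [hczero i hi]; simp)
    (fun h => absurd (Finset.mem_univ i0) h), hu0]
end
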